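/- arXiv:2605.20707 — 3 statements merged into one kernel-verified Lean document; each statement's English description precedes it below -/
import Mathlib

section
/- The set {n^{1/3} : n a cube-free positive integer} is linearly independent over ℚ. -/
open Real Polynomial IntermediateField

noncomputable def zeta3 : ℂ := Complex.exp (2 * Real.pi * Complex.I / 3)

lemma hzeta3 : IsPrimitiveRoot zeta3 3 := Complex.isPrimitiveRoot_exp 3 (by norm_num)

lemma cube_roots_complex {z : ℂ} (hz : z ^ 3 = 1) :
    z = 1 ∨ z = zeta3 ∨ z = zeta3 ^ 2 := by
  have h1 : zeta3 ^ 3 = 1 := hzeta3.pow_eq_one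
  have h2 : 1 + zeta3 + zeta3 ^ 2 = 0 := by
    have := hzeta3.geom_sum_eq_zero (by norm_num)
    rw [Finset.sum_range_succ, Finset.sum_range_succ, Finset.sum_range_one] at this
    linear_combination this
  have key : (z - 1) * (z - zeta3) * (z - zeta3 ^ 2) = 0 := by
    linear_combination hz + (z - 1) * h1 + (z - z ^ 2) * h2
  rcases mul_eq_zero.mp key with h | h
  · rcases mul_eq_zero.mp h with h | h
    · exact Or.inl (sub_eq_zero.mp h)
    · exact Or.inr (Or.inl (sub_eq_zero.mp h))
  · exact Or.inr (Or.inr (sub_eq_zero.mp h))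


lemma cubefree_ratio {n m : ℕ} (hn : 0 < n) (hm : 0 < m)
    (hcn : ∀ p : ℕ, p.Prime → ¬ p ^ 3 ∣ n) (hcm : ∀ p : ℕ, p.Prime → ¬ p ^ 3 ∣ m)
    (r : ℚ) (hr : r ^ 3 * m = n) : n = m := by
  have hr0 : r ≠ 0 := by
    rintro rfl
    have : (n:ℚ) = 0 := by simpa using hr.symm
    exact absurd (by exact_mod_cast this) hn.ne'
  have key : (r.num ^ 3 * m : ℤ) = (n : ℤ) * (r.den : ℤ) ^ 3 := by
    have h1 : ((r.num : ℚ) / r.den) ^ 3 * m = n := by rw [Rat.num_div_den]; exact_mod_cast hr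
    have hd : (r.den : ℚ) ≠ 0 := by exact_mod_cast r.den_nz
    field_simp at h1
    have h2 : ((r.num ^ 3 * m : ℤ) : ℚ) = ((n * r.den ^ 3 : ℤ) : ℚ) := by
      push_cast; linear_combination h1
    exact_mod_cast h2
  set u := r.num.natAbs with hu
  have keyN : u ^ 3 * m = n * r.den ^ 3 := by
    have := congrArg Int.natAbs key
    simpa [Int.natAbs_mul, Int.natAbs_pow] using this
  have hcop : Nat.Coprime u r.den := r.reduced
  have hu1 : u = 1 := by
    by_contra h1
    obtain ⟨p, hp, hpd⟩ := Nat.exists_prime_and_dvd h1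
    refine hcn p hp ?_
    have h3 : p ^ 3 ∣ n * r.den ^ 3 := keyN ▸ Dvd.dvd.mul_right (pow_dvd_pow_of_dvd hpd 3) m
    exact Nat.Coprime.dvd_of_dvd_mul_right
      ((Nat.Coprime.coprime_dvd_left hpd hcop).pow 3 3) h3
  have hv1 : r.den = 1 := by
    by_contra h1
    obtain ⟨p, hp, hpd⟩ := Nat.exists_prime_and_dvd h1
    refine hcm p hp ?_
    have h3 : p ^ 3 ∣ u ^ 3 * m := keyN.symm ▸ Dvd.dvd.mul_left (pow_dvd_pow_of_dvd hpd 3) n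
    exact Nat.Coprime.dvd_of_dvd_mul_left
      ((Nat.Coprime.coprime_dvd_left hpd hcop.symm).pow 3 3) h3
  have : u ^ 3 * m = n * 1 := by rw [← hv1]; exact keyN ▸ by rw [hv1, one_pow]
  simp [hu1, hv1] at keyN
  omega


lemma finrank_F : Module.finrank ℚ ℚ⟮zeta3⟯ = 2 := by
  have hint : IsIntegral ℚ zeta3 := (hzeta3.isIntegral (by norm_num)).tower_top
  rw [IntermediateField.adjoin.finrank hint,
    ← Polynomial.cyclotomic_eq_minpoly_rat hzeta3 (by norm_num),
    Polynomial.natDegree_cyclotomic]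
  decide

lemma rat_cube_of_mem_F (x : ℚ⟮zeta3⟯) (c : ℚ) (hx : x ^ 3 = algebraMap ℚ _ c) :
    ∃ r : ℚ, r ^ 3 = c := by
  by_contra hno
  push_neg at hno
  set g : ℚ[X] := X ^ 3 - C c with hg
  have hgd : g.natDegree = 3 := by
    simpa [hg] using Polynomial.natDegree_X_pow_sub_C (n := 3) (a := c)
  have hroots : g.roots = 0 := by
    rw [Multiset.eq_zero_iff_forall_notMem]
    intro r hr
    have := Polynomial.isRoot_of_mem_roots hr
    simp only [hg, Polynomial.IsRoot, Polynomial.eval_sub, Polynomial.eval_pow,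
      Polynomial.eval_X, Polynomial.eval_C, sub_eq_zero] at this
    exact hno r this
  have hirr : Irreducible g :=
    (Polynomial.irreducible_iff_roots_eq_zero_of_degree_le_three (by omega) (by omega)).mpr hroots
  have hint : IsIntegral ℚ zeta3 := (hzeta3.isIntegral (by norm_num)).tower_top
  have : FiniteDimensional ℚ ℚ⟮zeta3⟯ := IntermediateField.adjoin.finiteDimensional hint
  have hmin : minpoly ℚ x = g := by
    have hmonic : g.Monic := Polynomial.monic_X_pow_sub_C c (by norm_num)
    have haeval : Polynomial.aeval x g = 0 := by
      simp [hg, map_pow, hx]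
    exact (minpoly.eq_of_irreducible_of_monic hirr haeval hmonic).symm
  have h2 : (minpoly ℚ x).natDegree ≤ Module.finrank ℚ ℚ⟮zeta3⟯ := minpoly.natDegree_le x
  rw [hmin, hgd, finrank_F] at h2
  omega


set_option maxHeartbeats 1000000 in
set_option synthInstance.maxHeartbeats 100000 in
/-- The set `{n^{1/3} : n cube-free positive integer}` is linearly independent over `ℚ`. -/
theorem stmt3 (s : Finset ℕ) (q : ℕ → ℚ)
    (hs : ∀ n ∈ s, 0 < n ∧ ∀ p : ℕ, p.Prime → ¬ p ^ 3 ∣ n)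
    (h : ∑ n ∈ s, (q n : ℝ) * (n : ℝ) ^ ((1 : ℝ) / 3) = 0) :
    ∀ n ∈ s, q n = 0 := by
  classical
  set F := ℚ⟮zeta3⟯ with hF
  set f : Polynomial F := ∏ n ∈ s, (X ^ 3 - C (n : F)) with hfdef
  have hf_monic : f.Monic :=
    monic_prod_of_monic _ _ (fun n _ => monic_X_pow_sub_C _ (by norm_num))
  have hsplit : (f.map (algebraMap F ℂ)).Splits := IsAlgClosed.splits _
  set L : IntermediateField F ℂ := IntermediateField.adjoin F (f.rootSet ℂ) with hL
  haveI : Polynomial.IsSplittingField F L f :=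
    IntermediateField.adjoin_rootSet_isSplittingField hsplit
  haveI : FiniteDimensional F L := Polynomial.IsSplittingField.finiteDimensional L f
  have hsep : f.Separable := by
    apply Polynomial.separable_prod'
    · intro i hi j hj hij
      refine ⟨C ((j : F) - (i : F))⁻¹, -C ((j : F) - (i : F))⁻¹, ?_⟩
      have hne : (j : F) - (i : F) ≠ 0 := by
        rw [sub_ne_zero]
        exact_mod_cast (Ne.symm hij)
      rw [neg_mul, ← sub_eq_add_neg, ← mul_sub, sub_sub_sub_cancel_left,
        ← C_sub, ← C_mul, inv_mul_cancel₀ hne, C_1]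
    · intro i hi
      exact Polynomial.separable_X_pow_sub_C _ (by norm_num)
        (by exact_mod_cast (hs i hi).1.ne')
  haveI : IsGalois F L := IsGalois.of_separable_splitting_field hsep
  haveI : NoZeroSMulDivisors F ℂ :=
    inferInstance
  haveI : CharZero L := (algebraMap L ℂ).charZero
  -- membership of real cube roots
  have hcube : ∀ n : ℕ, n ∈ s → (((n : ℝ) ^ ((1:ℝ)/3) : ℝ) : ℂ) ^ 3 = (n : ℂ) := by
    intro n hn
    have h0 : ((n:ℝ) ^ ((1:ℝ)/3)) ^ 3 = (n : ℝ) := by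
      rw [← Real.rpow_natCast ((n:ℝ) ^ ((1:ℝ)/3)) 3, ← Real.rpow_mul (Nat.cast_nonneg n)]
      norm_num
    exact_mod_cast congrArg (fun x : ℝ => (x : ℂ)) h0
  have hα : ∀ n ∈ s, (((n:ℝ) ^ ((1:ℝ)/3) : ℝ) : ℂ) ∈ L := by
    intro n hn
    apply IntermediateField.subset_adjoin
    rw [Polynomial.mem_rootSet]
    refine ⟨hf_monic.ne_zero, ?_⟩
    rw [hfdef, map_prod]
    refine Finset.prod_eq_zero hn ?_
    rw [map_sub, map_pow, Polynomial.aeval_X, Polynomial.aeval_C, hcube n hn]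
    have : (algebraMap F ℂ) (n : F) = (n : ℂ) := by push_cast; rfl
    rw [this, sub_self]
  set a : {x // x ∈ s} → L := fun i => ⟨_, hα i i.2⟩ with ha
  have ha3 : ∀ i, (a i) ^ 3 = ((i : ℕ) : L) := by
    intro i
    apply Subtype.ext
    push_cast
    exact hcube i i.2
  have ha_ne : ∀ i, a i ≠ 0 := by
    intro i hzero
    have h1 : ((((i:ℕ):ℝ) ^ ((1:ℝ)/3) : ℝ) : ℂ) = 0 := congrArg Subtype.val hzero
    have h2 : ((i:ℕ):ℝ) ^ ((1:ℝ)/3) = 0 := Complex.ofReal_eq_zero.mp h1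
    have hipos : (0:ℝ) < ((i:ℕ):ℝ) := by exact_mod_cast (hs i i.2).1
    exact absurd h2 (ne_of_gt (Real.rpow_pos_of_pos hipos _))
  have hnL_ne : ∀ i : {x // x ∈ s}, ((i : ℕ) : L) ≠ 0 := by
    intro i
    exact_mod_cast (hs i i.2).1.ne'
  -- elements of L with cube 1 are fixed by every automorphism
  have hfix : ∀ (x : L), x ^ 3 = 1 → ∀ σ : L ≃ₐ[F] L, σ x = x := by
    intro x hx σ
    have hxC : (x : ℂ) ^ 3 = 1 := by exact_mod_cast congrArg (Subtype.val) hx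
    have hz3mem : zeta3 ∈ F := IntermediateField.subset_adjoin ℚ {zeta3} rfl
    obtain ⟨y, hy⟩ : ∃ y : F, (algebraMap F L y : L) = x := by
      rcases cube_roots_complex hxC with h1 | h1 | h1
      · exact ⟨1, by apply Subtype.ext; rw [h1]; simp⟩
      · exact ⟨⟨zeta3, hz3mem⟩, by apply Subtype.ext; rw [h1]; rfl⟩
      · exact ⟨⟨zeta3, hz3mem⟩ ^ 2, by apply Subtype.ext; rw [h1]; rfl⟩
    rw [← hy, AlgEquiv.commutes]
  -- the characters
  have hχex : ∀ i : {x // x ∈ s}, ∃ χ : (L ≃ₐ[F] L) →* L,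
      ∀ σ, χ σ = σ (a i) * (a i)⁻¹ := by
    intro i
    have hcube1 : ∀ σ : L ≃ₐ[F] L, (σ (a i) * (a i)⁻¹) ^ 3 = 1 := by
      intro σ
      rw [mul_pow, inv_pow, ← map_pow, ha3, map_natCast]
      exact mul_inv_cancel₀ (hnL_ne i)
    refine ⟨{ toFun := fun σ => σ (a i) * (a i)⁻¹,
              map_one' := by simpa using mul_inv_cancel₀ (ha_ne i),
              map_mul' := ?_ }, fun _ => rfl⟩
    intro σ τ
    show (σ * τ) (a i) * (a i)⁻¹ = (σ (a i) * (a i)⁻¹) * (τ (a i) * (a i)⁻¹)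
    have hτ : τ (a i) = (τ (a i) * (a i)⁻¹) * a i := by
      rw [mul_assoc, inv_mul_cancel₀ (ha_ne i), mul_one]
    have hστ : (σ * τ) (a i) = σ (τ (a i)) := rfl
    rw [hστ]
    conv_lhs => rw [hτ]
    rw [map_mul, hfix _ (hcube1 τ) σ]
    ring
  choose χ hχ using hχex
  have hχinj : Function.Injective χ := by
    intro i j hij
    have hfixed : ∀ σ : L ≃ₐ[F] L, σ (a i * (a j)⁻¹) = a i * (a j)⁻¹ := by
      intro σ
      have h1 : σ (a i) * (a i)⁻¹ = σ (a j) * (a j)⁻¹ := by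
        rw [← hχ i σ, ← hχ j σ, hij]
      have hσj : σ (a j) ≠ 0 := by simpa using ha_ne j
      rw [map_mul, map_inv₀, mul_inv_eq_iff_eq_mul₀ hσj,
        mul_inv_eq_iff_eq_mul₀ (ha_ne i)] at *
      rw [h1]; ring
    have hmem : a i * (a j)⁻¹ ∈
        IntermediateField.fixedField (⊤ : Subgroup (L ≃ₐ[F] L)) := by
      rintro ⟨σ, -⟩
      exact hfixed σ
    have tf : IntermediateField.fixedField (⊤ : Subgroup (L ≃ₐ[F] L)) = (⊥ : IntermediateField F L) :=
      ((IsGalois.tfae (F := ↥F) (E := ↥L)).out 0 1).mp (inferInstance : IsGalois F L)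
    rw [tf, IntermediateField.mem_bot] at hmem
    obtain ⟨y, hy⟩ := hmem
    have hy3 : algebraMap F L (y ^ 3) = ((i:ℕ) : L) * (((j:ℕ) : L))⁻¹ := by
      rw [map_pow, hy, mul_pow, inv_pow, ha3, ha3]
    have hyF : y ^ 3 = ((i:ℕ) : F) * (((j:ℕ) : F))⁻¹ := by
      apply (algebraMap F L).injective
      rw [hy3, map_mul, map_inv₀, map_natCast, map_natCast]
    have hyQ : y ^ 3 = algebraMap ℚ F (((i:ℕ) : ℚ) / ((j:ℕ) : ℚ)) := by
      rw [hyF, div_eq_mul_inv, map_mul, map_inv₀, map_natCast, map_natCast]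
    obtain ⟨r, hr⟩ := rat_cube_of_mem_F y _ hyQ
    have hrq : r ^ 3 * ((j:ℕ):ℚ) = ((i:ℕ):ℚ) := by
      have hj0 : ((j:ℕ):ℚ) ≠ 0 := by exact_mod_cast (hs j j.2).1.ne'
      rw [hr, div_mul_cancel₀ _ hj0]
    have := cubefree_ratio (hs i i.2).1 (hs j j.2).1 (hs i i.2).2 (hs j j.2).2 r hrq
    exact Subtype.ext this
  -- linear independence of characters
  have hLI : LinearIndependent L (fun i : {x // x ∈ s} => ⇑(χ i)) :=
    (linearIndependent_monoidHom (L ≃ₐ[F] L) L).comp χ hχinj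
  -- the vanishing linear combination
  have hsumL : ∑ i : {x // x ∈ s}, ((q i : L) * a i) = 0 := by
    apply Subtype.ext
    push_cast
    have hC : ∑ n ∈ s, ((q n : ℂ) * (((n:ℝ) ^ ((1:ℝ)/3) : ℝ) : ℂ)) = 0 := by
      have := congrArg (fun x : ℝ => (x : ℂ)) h
      push_cast at this
      convert this using 2 <;> norm_num
    rw [← Finset.sum_attach s (fun n => ((q n : ℂ) * (((n:ℝ) ^ ((1:ℝ)/3) : ℝ) : ℂ)))] at hC
    convert hC using 2
    exact Finset.attach_eq_univ.symm
  have key : ∀ i : {x // x ∈ s}, (q i : L) * a i = 0 := by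
    apply Fintype.linearIndependent_iff.mp hLI (fun i => (q i : L) * a i)
    funext σ
    have : (∑ i : {x // x ∈ s}, ((q i : L) * a i) • ⇑(χ i)) σ
        = ∑ i : {x // x ∈ s}, (q i : L) * σ (a i) := by
      rw [Finset.sum_apply]
      refine Finset.sum_congr rfl ?_
      intro i _
      rw [Pi.smul_apply, smul_eq_mul, hχ i σ]
      have : ((q (i:ℕ) : L)) * a i * (σ (a i) * (a i)⁻¹)
          = ((q (i:ℕ) : L)) * σ (a i) * (a i * (a i)⁻¹) := by ring
      rw [this, mul_inv_cancel₀ (ha_ne i), mul_one]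
    rw [this]
    have hmap : ∑ i : {x // x ∈ s}, (q i : L) * σ (a i) = σ (∑ i : {x // x ∈ s}, (q i : L) * a i) := by
      rw [map_sum]
      refine Finset.sum_congr rfl ?_
      intro i _
      rw [map_mul, map_ratCast]
    rw [hmap, hsumL, map_zero]
    rfl
  intro n hn
  have h1 := key ⟨n, hn⟩
  rcases mul_eq_zero.mp h1 with h2 | h2
  · exact_mod_cast h2
  · exact absurd h2 (ha_ne ⟨n, hn⟩)
end

section
/- Let m ≥ 1 and let n_1, …, n_m ≤ M be positive integers, and ε_j ∈ {±1} such that S = Σ_{j=1}^m ε_j n_j^{1/3} ≠ 0. Then |S| ≥ 1 / (m M^{1/3})^{3^{m−1} − 1}. -/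
set_option maxHeartbeats 1000000

open Real

namespace Stmt4Aux
open Complex Polynomial IntermediateField

noncomputable def ww : ℂ := (-1 + Real.sqrt 3 * Complex.I) / 2

lemma sqrt3_sq : (Real.sqrt 3 : ℂ)^2 = 3 := by
  norm_cast
  rw [Real.sq_sqrt]; norm_num

lemma ww_quad : ww^2 + ww + 1 = 0 := by
  unfold ww
  have h := Complex.I_sq
  linear_combination (Complex.I^2/4 : ℂ) * sqrt3_sq + (3/4 : ℂ) * h

lemma ww_cube : ww^3 = 1 := by
  linear_combination (ww - 1) * ww_quad

lemma ww_mk : ww = Complex.mk (-1/2) (Real.sqrt 3 / 2) := by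
  apply Complex.ext <;> simp [ww]

lemma abs_ww : ‖ww‖ = 1 := by
  have h3 : Real.sqrt 3 ^ 2 = 3 := Real.sq_sqrt (by norm_num)
  rw [ww_mk]
  rw [Complex.norm_def, Complex.normSq_mk]
  rw [show (-1/2 * (-1/2) + Real.sqrt 3/2 * (Real.sqrt 3/2) : ℝ) = 1 by nlinarith]
  exact Real.sqrt_one

lemma isIntegral_ww : IsIntegral ℤ ww :=
  ⟨X^3 - C 1, Polynomial.monic_X_pow_sub_C 1 (by norm_num),
   by simp [sub_eq_zero]; exact ww_cube⟩

noncomputable def fw (a : ZMod 3) : ℂ := ww ^ a.val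

lemma fw_natCast (k : ℕ) : fw (k : ZMod 3) = ww ^ k := by
  unfold fw
  rw [ZMod.val_natCast]
  conv_rhs => rw [← Nat.mod_add_div k 3, pow_add, pow_mul, ww_cube, one_pow, mul_one]

lemma zmod_self_cast (a : ZMod 3) : ((a.val : ℕ) : ZMod 3) = a := by
  rw [ZMod.natCast_val, ZMod.cast_id]

lemma fw_add (a b : ZMod 3) : fw (a + b) = fw a * fw b := by
  rw [← zmod_self_cast a, ← zmod_self_cast b, ← Nat.cast_add, fw_natCast, fw_natCast, fw_natCast, pow_add]

lemma fw_pow (a : ZMod 3) (k : ℕ) : (fw a) ^ k = fw (a * (k : ZMod 3)) := by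
  conv_lhs => rw [← zmod_self_cast a]
  rw [fw_natCast, ← pow_mul, ← fw_natCast]
  push_cast
  rw [zmod_self_cast]

lemma abs_fw (a : ZMod 3) : ‖fw a‖ = 1 := by
  unfold fw; rw [norm_pow, abs_ww, one_pow]

lemma fw_zero : fw 0 = 1 := rfl

lemma fw_one : fw 1 = ww := by
  show ww ^ (1 : ZMod 3).val = ww
  norm_num [show (1:ZMod 3).val = 1 from rfl]

lemma fw_two : fw 2 = ww^2 := by
  show ww ^ (2 : ZMod 3).val = ww^2
  norm_num [show (2:ZMod 3).val = 2 from rfl]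

lemma isIntegral_fw (a : ZMod 3) : IsIntegral ℤ (fw a) := isIntegral_ww.pow _

lemma cube_eq_one (z : ℂ) (hz : z^3 = 1) : ∃ a : ZMod 3, z = fw a := by
  have key : (z - 1) * (z - ww) * (z - ww^2) = 0 := by
    linear_combination hz + (z - z^2) * ww_quad + (z - 1) * ww_cube
  rcases mul_eq_zero.mp key with h | h
  · rcases mul_eq_zero.mp h with h | h
    · exact ⟨0, by rw [fw_zero, ← sub_eq_zero]; exact h⟩
    · exact ⟨1, by rw [fw_one, ← sub_eq_zero]; exact h⟩
  · exact ⟨2, by rw [fw_two, ← sub_eq_zero]; exact h⟩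

lemma quad_root (z : ℂ) (hz : z^2 + z + 1 = 0) : z = fw 1 ∨ z = fw 2 := by
  have key : (z - ww) * (z - ww^2) = 0 := by
    linear_combination hz + (-z) * ww_quad + ww_cube
  rcases mul_eq_zero.mp key with h | h
  · exact Or.inl (by rw [fw_one, ← sub_eq_zero]; exact h)
  · exact Or.inr (by rw [fw_two, ← sub_eq_zero]; exact h)

open Finset in
theorem key : ∀ m : ℕ, 1 ≤ m → ∀ (M : ℝ) (n : Fin m → ℕ) (ε : Fin m → ℝ),
    (∀ j, 0 < n j ∧ (n j : ℝ) ≤ M) → (∀ j, ε j = 1 ∨ ε j = -1) →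
    (∑ j, ε j * (n j : ℝ) ^ ((1:ℝ)/3) ≠ 0) →
    |∑ j, ε j * (n j : ℝ) ^ ((1:ℝ)/3)| ≥ 1 / ((m:ℝ) * M ^ ((1:ℝ)/3)) ^ (3^(m-1) - 1 : ℕ) := by
  intro m
  induction m using Nat.strong_induction_on with
  | _ m IH =>
  intro hm M n ε hn hε hS
  obtain ⟨k, rfl⟩ : ∃ k, m = k + 1 := ⟨m - 1, (Nat.succ_pred_eq_of_pos hm).symm⟩
  -- basic facts
  set αr : Fin (k+1) → ℝ := fun j => (n j : ℝ) ^ ((1:ℝ)/3) with hαr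
  have hM1 : (1:ℝ) ≤ M := le_trans (by exact_mod_cast (hn 0).1) (hn 0).2
  have hM0 : (0:ℝ) < M := lt_of_lt_of_le one_pos hM1
  have hα1 : ∀ j, 1 ≤ αr j := by
    intro j
    have h1 : (1:ℝ) ≤ (n j : ℝ) := by exact_mod_cast (hn j).1
    calc (1:ℝ) = 1 ^ ((1:ℝ)/3) := by rw [Real.one_rpow]
    _ ≤ αr j := Real.rpow_le_rpow (by norm_num) h1 (by norm_num)
  have hαpos : ∀ j, 0 < αr j := fun j => lt_of_lt_of_le one_pos (hα1 j)
  have hαM : ∀ j, αr j ≤ M ^ ((1:ℝ)/3) :=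
    fun j => Real.rpow_le_rpow (Nat.cast_nonneg _) (hn j).2 (by norm_num)
  have hMr1 : (1:ℝ) ≤ M ^ ((1:ℝ)/3) := by
    calc (1:ℝ) = 1 ^ ((1:ℝ)/3) := by rw [Real.one_rpow]
    _ ≤ M ^ ((1:ℝ)/3) := Real.rpow_le_rpow (by norm_num) hM1 (by norm_num)
  have hcube : ∀ j, αr j ^ (3:ℕ) = (n j : ℝ) := by
    intro j
    rw [hαr, ← Real.rpow_natCast ((n j : ℝ) ^ ((1:ℝ)/3)) 3, ← Real.rpow_mul (Nat.cast_nonneg _)]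
    norm_num
  -- case m = 1
  rcases Nat.eq_zero_or_pos k with rfl | hk1
  · have he : (3:ℕ) ^ (0 + 1 - 1) - 1 = 0 := by norm_num
    rw [he, pow_zero, Fin.sum_univ_one]
    rw [div_one]
    rcases hε 0 with h | h <;>
      simp only [h, one_mul, neg_one_mul, abs_neg] <;>
      rw [abs_of_pos (hαpos 0)] <;> exact hα1 0
  -- main case
  set αc : Fin (k+1) → ℂ := fun j => ((αr j : ℝ) : ℂ) with hαc
  set εc : Fin (k+1) → ℂ := fun j => ((ε j : ℝ) : ℂ) with hεc
  set T : (Fin k → ZMod 3) → ℂ :=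
    fun σ => ∑ j, εc j * fw ((Fin.cons (0:ZMod 3) σ : Fin (k+1) → ZMod 3) j) * αc j with hT
  set Sr : ℝ := ∑ j, ε j * (n j : ℝ) ^ ((1:ℝ)/3) with hSr
  have hcons0 : ∀ j : Fin (k+1), (Fin.cons (0 : ZMod 3) (0 : Fin k → ZMod 3) : Fin (k+1) → ZMod 3) j = 0 := by
    intro j
    refine Fin.cases ?_ ?_ j
    · rfl
    · intro i; rfl
  have hT0 : T 0 = (Sr : ℂ) := by
    rw [hT, hSr]
    push_cast
    apply Finset.sum_congr rfl
    intro j _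
    rw [hcons0 j, fw_zero]
    ring
  have hSrne : (Sr : ℂ) ≠ 0 := by exact_mod_cast hS
  have habsεc : ∀ j, ‖εc j‖ = 1 := by
    intro j
    rcases hε j with h | h <;> simp [hεc, h]
  have habsαc : ∀ j, ‖αc j‖ = αr j := by
    intro j
    rw [hαc]
    simp [Complex.norm_real, Real.norm_eq_abs, abs_of_pos (hαpos j)]
  have habsT : ∀ σ, ‖T σ‖ ≤ ((k:ℝ)+1) * M ^ ((1:ℝ)/3) := by
    intro σ
    rw [hT]
    calc ‖∑ j, εc j * fw ((Fin.cons (0:ZMod 3) σ : Fin (k+1) → ZMod 3) j) * αc j‖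
        ≤ ∑ j, ‖εc j * fw ((Fin.cons (0:ZMod 3) σ : Fin (k+1) → ZMod 3) j) * αc j‖ :=
          norm_sum_le _ _
      _ ≤ ∑ j : Fin (k+1), M ^ ((1:ℝ)/3) := by
          apply Finset.sum_le_sum
          intro j _
          rw [norm_mul, norm_mul, habsεc, habsαc, abs_fw]
          simpa using hαM j
      _ = ((k:ℝ)+1) * M ^ ((1:ℝ)/3) := by
          rw [Finset.sum_const]
          simp [mul_comm]
  by_cases hvan : ∀ σ : Fin k → ZMod 3, T σ ≠ 0
  · -- all conjugate factors nonzero: norm argument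
    set Sgen : Set ℂ := insert ww (Set.range αc) with hSgen
    set K : IntermediateField ℚ ℂ := IntermediateField.adjoin ℚ Sgen with hKdef
    have hωK : ww ∈ K := IntermediateField.subset_adjoin ℚ _ (Set.mem_insert _ _)
    have hαK : ∀ j, αc j ∈ K :=
      fun j => IntermediateField.subset_adjoin ℚ _ (Set.mem_insert_of_mem _ ⟨j, rfl⟩)
    have hαc3 : ∀ j, αc j ^ (3:ℕ) = ((n j : ℕ) : ℂ) := by
      intro j
      rw [hαc]
      rw [show ((αr j : ℝ):ℂ) ^ (3:ℕ) = (((αr j ^ (3:ℕ) : ℝ)):ℂ) by push_cast; ring]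
      rw [hcube j]
      push_cast
      ring
    have hintαc : ∀ j, IsIntegral ℤ (αc j) := by
      intro j
      refine ⟨Polynomial.X^3 - Polynomial.C ((n j : ℤ)), Polynomial.monic_X_pow_sub_C _ (by norm_num), ?_⟩
      simp [hαc3 j]
    have hint : ∀ s ∈ Sgen, IsIntegral ℚ s ∧ ((minpoly ℚ s).map (algebraMap ℚ ℂ)).Splits := by
      intro s hs
      refine ⟨?_, IsAlgClosed.splits _⟩
      rcases hs with rfl | ⟨j, rfl⟩
      · exact isIntegral_ww.tower_top
      · exact (hintαc j).tower_top
    set wK : K := ⟨ww, hωK⟩ with hwKdef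
    set aK : Fin (k+1) → K := fun j => ⟨αc j, hαK j⟩ with haKdef
    set εK : Fin (k+1) → K := fun j => if ε j = 1 then 1 else -1 with hεKdef
    have hinj : Function.Injective (algebraMap K ℂ) := (algebraMap K ℂ).injective
    have hεKc : ∀ j, algebraMap K ℂ (εK j) = εc j := by
      intro j
      rcases hε j with h | h <;> norm_num [hεKdef, hεc, h]
    set TK : (Fin k → ZMod 3) → K :=
      fun σ => ∑ j, εK j * wK ^ ((Fin.cons (0:ZMod 3) σ : Fin (k+1) → ZMod 3) j).val * aK j with hTKdef
    have hTKc : ∀ σ, algebraMap K ℂ (TK σ) = T σ := by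
      intro σ
      rw [hTKdef, hT]
      rw [map_sum]
      apply Finset.sum_congr rfl
      intro j _
      rw [map_mul, map_mul, map_pow, hεKc]
      rfl
    set PK : K := ∏ σ : Fin k → ZMod 3, TK σ with hPKdef
    set P : ℂ := ∏ σ : Fin k → ZMod 3, T σ with hPdef
    have hPKc : algebraMap K ℂ PK = P := by
      rw [hPKdef, hPdef, map_prod]
      exact Finset.prod_congr rfl (fun σ _ => hTKc σ)
    have hPmem : P ∈ K := hPKc ▸ (PK.2)
    have hPint : IsIntegral ℤ P := by
      rw [hPdef]
      apply IsIntegral.prod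
      intro σ _
      rw [hT]
      apply IsIntegral.sum
      intro j _
      apply IsIntegral.mul
      apply IsIntegral.mul
      · rcases hε j with h | h <;> simp [hεc, h] <;> first | exact isIntegral_one | exact isIntegral_one.neg
      · exact isIntegral_fw _
      · exact hintαc j
    have hPQ : IsIntegral ℚ P := hPint.tower_top
    have hPne : P ≠ 0 := by
      rw [hPdef]
      exact Finset.prod_ne_zero_iff.mpr (fun σ _ => hvan σ)
    have hαne : ∀ j, αc j ≠ 0 := by
      intro j
      rw [hαc]
      simpa using ne_of_gt (hαpos j)
    -- every conjugate of P equals P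
    have hfix : ∀ y : ℂ, Polynomial.aeval y (minpoly ℚ P) = 0 → y = P := by
      intro y hy
      obtain ⟨φ, hφ⟩ := IntermediateField.exists_algHom_adjoin_of_splits_of_aeval hint hPmem hy
      have hwq : φ wK ^ 2 + φ wK + 1 = 0 := by
        have h0 : wK^2 + wK + 1 = 0 := by
          apply hinj
          rw [map_add, map_add, map_pow, map_one, map_zero]
          exact ww_quad
        have := congrArg φ h0
        simpa [map_add, map_pow, map_one] using this
      obtain ⟨u, hu, huu⟩ : ∃ u : ZMod 3, φ wK = fw u ∧ u * u = 1 := by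
        rcases quad_root (φ wK) hwq with h | h
        · exact ⟨1, h, by decide⟩
        · exact ⟨2, h, by decide⟩
      have ht0 : ∀ j, ∃ a : ZMod 3, φ (aK j) = fw a * αc j := by
        intro j
        have hcubeK : (aK j)^(3:ℕ) = ((n j : ℕ) : K) := by
          apply hinj
          rw [map_pow, map_natCast]
          exact hαc3 j
        have h1 : (φ (aK j))^(3:ℕ) = ((n j : ℕ) : ℂ) := by
          have := congrArg φ hcubeK
          rwa [map_pow, map_natCast] at this
        have h3 : (φ (aK j) / αc j) ^ 3 = 1 := by
          rw [div_pow, h1, ← hαc3 j, div_self (pow_ne_zero _ (hαne j))]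
        obtain ⟨a, ha⟩ := cube_eq_one _ h3
        exact ⟨a, by rw [← ha, div_mul_cancel₀ _ (hαne j)]⟩
      choose t ht using ht0
      have hφε : ∀ j, φ (εK j) = εc j := by
        intro j
        rcases hε j with h | h <;> norm_num [hεKdef, hεc, h]
      set g : (Fin k → ZMod 3) → (Fin k → ZMod 3) :=
        fun σ i => u * σ i + t i.succ - t 0 with hgdef
      have hφT : ∀ σ : Fin k → ZMod 3, φ (TK σ) = fw (t 0) * T (g σ) := by
        intro σ
        rw [hTKdef, hT, map_sum, Finset.mul_sum]
        apply Finset.sum_congr rfl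
        intro j _
        rw [map_mul, map_mul, map_pow, hφε, hu, ht j, fw_pow, zmod_self_cast]
        have hcons : (Fin.cons (0:ZMod 3) (g σ) : Fin (k+1) → ZMod 3) j
            = u * (Fin.cons (0:ZMod 3) σ : Fin (k+1) → ZMod 3) j + t j - t 0 := by
          refine Fin.cases ?_ ?_ j
          · simp [Fin.cons_zero]
          · intro i
            simp [Fin.cons_succ, hgdef]
        rw [hcons]
        have hkey : fw (u * (Fin.cons (0:ZMod 3) σ : Fin (k+1) → ZMod 3) j) * fw (t j)
            = fw (t 0) * fw (u * (Fin.cons (0:ZMod 3) σ : Fin (k+1) → ZMod 3) j + t j - t 0) := by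
          rw [← fw_add, ← fw_add]
          congr 1
          ring
        calc εc j * fw (u * (Fin.cons (0:ZMod 3) σ : Fin (k+1) → ZMod 3) j) * (fw (t j) * αc j)
            = (fw (u * (Fin.cons (0:ZMod 3) σ : Fin (k+1) → ZMod 3) j) * fw (t j)) * (εc j * αc j) := by
              ring
          _ = (fw (t 0) * fw (u * (Fin.cons (0:ZMod 3) σ : Fin (k+1) → ZMod 3) j + t j - t 0)) * (εc j * αc j) := by
              rw [hkey]
          _ = fw (t 0) * (εc j * fw (u * (Fin.cons (0:ZMod 3) σ : Fin (k+1) → ZMod 3) j + t j - t 0) * αc j) := by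
              ring
      have hbij : Function.Bijective g := by
        apply Function.bijective_iff_has_inverse.mpr
        refine ⟨fun σ i => u * (σ i - t i.succ + t 0), ?_, ?_⟩
        · intro σ
          funext i
          simp only [hgdef]
          have : u * (u * σ i + t i.succ - t 0 - t i.succ + t 0) = (u * u) * σ i := by ring
          rw [this, huu, one_mul]
        · intro σ
          funext i
          simp only [hgdef]
          have : u * (u * (σ i - t i.succ + t 0)) + t i.succ - t 0
              = (u * u) * σ i + (1 - u * u) * (t i.succ - t 0) := by ring
          rw [this, huu]
          ring
      have hfw3 : fw (t 0) ^ (3:ℕ) = 1 := by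
        rw [fw_pow]
        rw [show ((3:ℕ) : ZMod 3) = 0 by decide]
        rw [mul_zero, fw_zero]
      have hφP : φ PK = P := by
        rw [hPKdef, map_prod]
        rw [Finset.prod_congr rfl (fun σ _ => hφT σ)]
        rw [Finset.prod_mul_distrib, Finset.prod_const]
        rw [Function.Bijective.prod_comp hbij T]
        rw [Finset.card_univ]
        rw [show Fintype.card (Fin k → ZMod 3) = 3^k by simp [Fintype.card_fun]]
        rw [show (3:ℕ)^k = 3 * 3^(k-1) by
          rw [← pow_succ']
          congr 1
          omega]
        rw [pow_mul, hfw3, one_pow, one_mul, hPdef]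
      have hPKeq : (⟨P, hPmem⟩ : K) = PK := Subtype.ext hPKc.symm
      rw [← hφ, hPKeq, hφP]
    -- P is a nonzero rational integer, so |P| ≥ 1
    have hdeg : (minpoly ℚ P).degree = 1 := by
      have hsplits : ((minpoly ℚ P).map (algebraMap ℚ ℂ)) ≠ 0 :=
        Polynomial.map_ne_zero (minpoly.ne_zero hPQ)
      have hsp2 : ((minpoly ℚ P).map (algebraMap ℚ ℂ)).Splits := IsAlgClosed.splits _
      have hcard : (minpoly ℚ P).natDegree = (((minpoly ℚ P).map (algebraMap ℚ ℂ)).roots).card :=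
        (by rw [← Polynomial.natDegree_map (algebraMap ℚ ℂ)]; exact hsp2.natDegree_eq_card_roots)
      have hnodup : (((minpoly ℚ P).map (algebraMap ℚ ℂ)).roots).Nodup :=
        Polynomial.nodup_roots ((minpoly.irreducible hPQ).separable.map)
      have hsub : (((minpoly ℚ P).map (algebraMap ℚ ℂ)).roots).toFinset ⊆ {P} := by
        intro y hy
        rw [Multiset.mem_toFinset, Polynomial.mem_roots hsplits] at hy
        have : Polynomial.aeval y (minpoly ℚ P) = 0 := by
          rw [Polynomial.aeval_def, ← Polynomial.eval_map]
          exact hy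
        simp [hfix y this]
      have hle : (((minpoly ℚ P).map (algebraMap ℚ ℂ)).roots).card ≤ 1 := by
        rw [← Multiset.toFinset_card_eq_card_iff_nodup.mpr hnodup]
        exact le_trans (Finset.card_le_card hsub) (by simp)
      have hge : 1 ≤ (minpoly ℚ P).natDegree := minpoly.natDegree_pos hPQ
      have h1 : (minpoly ℚ P).natDegree = 1 := by omega
      have := (Polynomial.degree_eq_iff_natDegree_eq (n := 1) (minpoly.ne_zero hPQ)).mpr h1
      exact_mod_cast this
    obtain ⟨q, hq⟩ := minpoly.mem_range_of_degree_eq_one ℚ P hdeg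
    have hqint : IsIntegral ℤ q := by
      rw [← isIntegral_algebraMap_iff (show Function.Injective (algebraMap ℚ ℂ) from (algebraMap ℚ ℂ).injective)]
      rw [hq]
      exact hPint
    obtain ⟨z, hz⟩ := IsIntegrallyClosed.isIntegral_iff.mp hqint
    have hq0 : q ≠ 0 := by
      intro h
      apply hPne
      rw [← hq, h, map_zero]
    have hz0 : z ≠ 0 := by
      intro h
      apply hq0
      rw [← hz, h, map_zero]
    have habsP : 1 ≤ ‖P‖ := by
      rw [← hq]
      rw [show algebraMap ℚ ℂ q = ((q:ℝ) : ℂ) by push_cast; norm_num]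
      rw [Complex.norm_real, Real.norm_eq_abs]
      have : (1:ℚ) ≤ |q| := by
        rw [← hz, show algebraMap ℤ ℚ z = ((z:ℤ):ℚ) from by simp, ← Int.cast_abs]
        exact_mod_cast Int.one_le_abs hz0
      calc (1:ℝ) = ((1:ℚ):ℝ) := by norm_num
        _ ≤ ((|q|:ℚ):ℝ) := by exact_mod_cast this
        _ = |(q:ℝ)| := by push_cast; ring
    -- final bound
    set B : ℝ := ((k:ℝ)+1) * M ^ ((1:ℝ)/3) with hB
    have hB1 : (1:ℝ) ≤ B := by
      rw [hB]
      nlinarith [hMr1, Nat.cast_nonneg (α := ℝ) k]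
    have hchain : 1 ≤ |Sr| * B ^ (3^k - 1 : ℕ) := by
      have h1 : ‖P‖ = ∏ σ : Fin k → ZMod 3, ‖T σ‖ := by
        rw [hPdef, norm_prod]
      have h2 : (∏ σ : Fin k → ZMod 3, ‖T σ‖)
          = ‖T 0‖ * ∏ σ ∈ (univ : Finset (Fin k → ZMod 3)).erase 0, ‖T σ‖ :=
        (Finset.mul_prod_erase _ _ (Finset.mem_univ 0)).symm
      have h3 : (∏ σ ∈ (univ : Finset (Fin k → ZMod 3)).erase 0, ‖T σ‖)
          ≤ B ^ (3^k - 1 : ℕ) := by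
        calc (∏ σ ∈ (univ : Finset (Fin k → ZMod 3)).erase 0, ‖T σ‖)
            ≤ ∏ _σ ∈ (univ : Finset (Fin k → ZMod 3)).erase 0, B := by
              apply Finset.prod_le_prod
              · intro σ _; exact norm_nonneg _
              · intro σ _; exact habsT σ
          _ = B ^ (3^k - 1 : ℕ) := by
              rw [Finset.prod_const, Finset.card_erase_of_mem (Finset.mem_univ 0), Finset.card_univ]
              congr 1
              simp [Fintype.card_fun]
      calc (1:ℝ) ≤ ‖P‖ := habsP
        _ = |Sr| * ∏ σ ∈ (univ : Finset (Fin k → ZMod 3)).erase 0, ‖T σ‖ := by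
            rw [h1, h2, hT0, Complex.norm_real, Real.norm_eq_abs]
        _ ≤ |Sr| * B ^ (3^k - 1 : ℕ) := by
            apply mul_le_mul_of_nonneg_left h3 (abs_nonneg _)
    have hBpos : (0:ℝ) < B ^ (3^k - 1 : ℕ) := pow_pos (lt_of_lt_of_le one_pos hB1) _
    rw [ge_iff_le,
      show ((↑(k+1):ℝ)) * M ^ ((1:ℝ)/3) = B by rw [hB]; push_cast; ring,
      show (3:ℕ)^(k+1-1) - 1 = 3^k - 1 by norm_num,
      div_le_iff₀ hBpos]
    exact hchain
  · -- some conjugate factor vanishes: reduction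
    push_neg at hvan
    obtain ⟨σ, hσ0⟩ := hvan
    have hσne : σ ≠ 0 := by
      intro h
      rw [h, hT0] at hσ0
      exact hSrne hσ0
    obtain ⟨i0, hi0⟩ := Function.ne_iff.mp hσne
    set c : Fin (k+1) → ZMod 3 := (Fin.cons (0:ZMod 3) σ : Fin (k+1) → ZMod 3) with hc
    set A : ZMod 3 → ℝ := fun b => ∑ j ∈ univ.filter (fun j => c j = b), ε j * αr j with hA
    have hTσ : T σ = ∑ b : ZMod 3, fw b * ((A b : ℝ) : ℂ) := by
      show (∑ j, εc j * fw (c j) * αc j) = _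
      rw [← Finset.sum_fiberwise univ c (fun j => εc j * fw (c j) * αc j)]
      apply Finset.sum_congr rfl
      intro b _
      rw [hA]
      push_cast
      rw [Finset.mul_sum]
      apply Finset.sum_congr rfl
      intro j hj
      rw [Finset.mem_filter] at hj
      rw [hj.2, hεc, hαc]
      ring
    have huniv3 : (univ : Finset (ZMod 3)) = {0, 1, 2} := by decide
    have hEq : ((A 0 : ℝ) : ℂ) + ww * ((A 1 : ℝ):ℂ) + ww^2 * ((A 2 : ℝ):ℂ) = 0 := by
      rw [hTσ, huniv3] at hσ0
      rw [Finset.sum_insert (by decide), Finset.sum_insert (by decide),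
        Finset.sum_singleton, fw_zero, fw_one, fw_two] at hσ0
      rw [← hσ0]
      ring
    have h2 : ((A 0 - A 2 : ℝ) : ℂ) + ww * ((A 1 - A 2 : ℝ):ℂ) = 0 := by
      push_cast
      linear_combination hEq - ((A 2 : ℝ):ℂ) * ww_quad
    have hs3 : (0:ℝ) < Real.sqrt 3 := Real.sqrt_pos.mpr (by norm_num)
    have him : Real.sqrt 3 / 2 * (A 1 - A 2) = 0 := by
      have h3 := congrArg Complex.im h2
      simpa [ww_mk] using h3
    have hA12 : A 1 = A 2 := by
      rcases mul_eq_zero.mp him with h | h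
      · exfalso; nlinarith
      · linarith
    have hre : (A 0 - A 2) + (-1/2) * (A 1 - A 2) = 0 := by
      have h3 := congrArg Complex.re h2
      simpa [ww_mk] using h3
    have hA02 : A 0 = A 2 := by nlinarith [hre, hA12]
    have hSr3 : Sr = 3 * A 0 := by
      rw [hSr]
      rw [show (∑ j, ε j * (n j:ℝ) ^ ((1:ℝ)/3)) = ∑ j, ε j * αr j from rfl]
      rw [← Finset.sum_fiberwise univ c (fun j => ε j * αr j), huniv3]
      rw [Finset.sum_insert (by decide), Finset.sum_insert (by decide), Finset.sum_singleton]
      have : ∀ b, ∑ j ∈ univ.filter (fun j => c j = b), ε j * (n j:ℝ) ^ ((1:ℝ)/3) = A b := by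
        intro b; rw [hA]
      rw [this 0, this 1, this 2, hA12, hA02]
      ring
    -- now reduce to the subset G0
    set G0 : Finset (Fin (k+1)) := univ.filter (fun j => c j = 0) with hG0
    set m₀ : ℕ := G0.card with hm₀
    have hA0sum : A 0 = ∑ j ∈ G0, ε j * αr j := by rw [hA]
    have hA0ne : A 0 ≠ 0 := by
      intro h
      apply hS
      rw [hSr3, h]; ring
    have hm₀1 : 1 ≤ m₀ := by
      rcases Nat.eq_zero_or_pos m₀ with h | h
      · exfalso
        apply hA0ne
        have hG0e : G0 = ∅ := Finset.card_eq_zero.mp h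
        rw [hA0sum, hG0e, Finset.sum_empty]
      · exact h
    have hm₀lt : m₀ < k + 1 := by
      have hne : G0 ≠ univ := by
        intro h
        have : c i0.succ = 0 := by
          have := Finset.mem_filter.mp (h ▸ Finset.mem_univ i0.succ)
          exact this.2
        rw [hc, Fin.cons_succ] at this
        exact hi0 this
      calc m₀ < (univ : Finset (Fin (k+1))).card :=
            Finset.card_lt_card (Finset.ssubset_iff_subset_ne.mpr ⟨Finset.subset_univ _, hne⟩)
        _ = k + 1 := by simp
    set e := G0.equivFin with he
    set n' : Fin m₀ → ℕ := fun i => n (e.symm i).1 with hn'def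
    set ε' : Fin m₀ → ℝ := fun i => ε (e.symm i).1 with hε'def
    have hsum' : ∑ i, ε' i * (n' i : ℝ) ^ ((1:ℝ)/3) = A 0 := by
      rw [hA0sum]
      rw [show (∑ i, ε' i * (n' i : ℝ) ^ ((1:ℝ)/3))
          = ∑ i : Fin m₀, (fun x : G0 => ε x.1 * (n x.1 : ℝ) ^ ((1:ℝ)/3)) (e.symm i) from rfl]
      rw [Equiv.sum_comp e.symm (fun x : G0 => ε x.1 * (n x.1 : ℝ) ^ ((1:ℝ)/3))]
      rw [← Finset.sum_coe_sort G0 (fun j => ε j * αr j)]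
    have hIH := IH m₀ hm₀lt hm₀1 M n' ε'
      (fun i => hn _) (fun i => hε _)
      (by rw [hsum']; exact hA0ne)
    rw [hsum'] at hIH
    clear he hn'def hε'def
    clear_value ε' n' e m₀
    -- conclude
    have hbase1 : (1:ℝ) ≤ (m₀ : ℝ) * M ^ ((1:ℝ)/3) := by
      have h1 : (1:ℝ) ≤ (m₀:ℝ) := by exact_mod_cast hm₀1
      nlinarith [hMr1]
    have hmono : ((m₀:ℝ) * M ^ ((1:ℝ)/3)) ^ (3 ^ (m₀ - 1) - 1 : ℕ)
        ≤ (((k:ℝ)+1) * M ^ ((1:ℝ)/3)) ^ (3 ^ (k+1-1) - 1 : ℕ) := by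
      have hb2 : ((m₀:ℝ) * M ^ ((1:ℝ)/3)) ≤ (((k:ℝ)+1) * M ^ ((1:ℝ)/3)) := by
        have : (m₀:ℝ) ≤ (k:ℝ)+1 := by exact_mod_cast le_of_lt hm₀lt
        nlinarith [hMr1]
      calc ((m₀:ℝ) * M ^ ((1:ℝ)/3)) ^ (3 ^ (m₀ - 1) - 1 : ℕ)
          ≤ (((k:ℝ)+1) * M ^ ((1:ℝ)/3)) ^ (3 ^ (m₀ - 1) - 1 : ℕ) := by
            apply pow_le_pow_left₀ (by linarith) hb2
        _ ≤ (((k:ℝ)+1) * M ^ ((1:ℝ)/3)) ^ (3 ^ (k+1-1) - 1 : ℕ) := by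
            apply pow_le_pow_right₀ (by linarith)
            apply Nat.sub_le_sub_right
            apply Nat.pow_le_pow_right (by norm_num)
            omega
    have hpos : (0:ℝ) < ((m₀:ℝ) * M ^ ((1:ℝ)/3)) ^ (3 ^ (m₀ - 1) - 1 : ℕ) :=
      pow_pos (lt_of_lt_of_le one_pos hbase1) _
    have hfinal : 1 / (((k:ℝ)+1) * M ^ ((1:ℝ)/3)) ^ (3 ^ (k+1-1) - 1 : ℕ)
        ≤ 1 / ((m₀:ℝ) * M ^ ((1:ℝ)/3)) ^ (3 ^ (m₀ - 1) - 1 : ℕ) :=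
      one_div_le_one_div_of_le hpos hmono
    have habs : |A 0| ≤ |Sr| := by
      rw [hSr3, abs_mul]
      have : |(3:ℝ)| = 3 := by norm_num
      nlinarith [abs_nonneg (A 0)]
    rw [ge_iff_le]
    calc 1 / ((↑(k+1):ℝ) * M ^ ((1:ℝ)/3)) ^ (3 ^ (k+1-1) - 1 : ℕ)
        = 1 / (((k:ℝ)+1) * M ^ ((1:ℝ)/3)) ^ (3 ^ (k+1-1) - 1 : ℕ) := by push_cast; ring_nf
      _ ≤ 1 / ((m₀:ℝ) * M ^ ((1:ℝ)/3)) ^ (3 ^ (m₀ - 1) - 1 : ℕ) := hfinal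
      _ ≤ |A 0| := hIH
      _ ≤ |Sr| := habs
      _ = |∑ j, ε j * (n j : ℝ) ^ ((1:ℝ)/3)| := by rw [hSr]


end Stmt4Aux

/-- Liouville-type lower bound for nonvanishing signed sums of cube roots:
if `n_1, …, n_m ≤ M` are positive integers and `ε_j = ±1` with
`S = Σ ε_j n_j^{1/3} ≠ 0`, then `|S| ≥ (m M^{1/3})^{-(3^{m-1} - 1)}`. -/
theorem stmt4 (m : ℕ) (hm : 1 ≤ m) (M : ℝ) (n : Fin m → ℕ) (ε : Fin m → ℝ)
    (hn : ∀ j, 0 < n j ∧ (n j : ℝ) ≤ M)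
    (hε : ∀ j, ε j = 1 ∨ ε j = -1)
    (hS : ∑ j, ε j * (n j : ℝ) ^ ((1 : ℝ) / 3) ≠ 0) :
    |∑ j, ε j * (n j : ℝ) ^ ((1 : ℝ) / 3)| ≥
      1 / ((m : ℝ) * M ^ ((1 : ℝ) / 3)) ^ (3 ^ (m - 1) - 1 : ℕ) :=
  Stmt4Aux.key m hm M n ε hn hε hS
end

section
/- Let (c_n)_{n≥1} be real numbers with Σ_n c_n^2 < ∞, let (X_n) be independent uniform [0,1] random variables, and set Z = Σ_n c_n cos(2π X_n) (converging in L^2). Then for every positive integer k, E[|Z|^{2k}] ≤ k! · (Σ_n c_n^2)^k. -/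
open Real MeasureTheory ProbabilityTheory Filter

noncomputable def Mr (m : ℕ) : ℝ := (2*m).factorial / (4^m * m.factorial)

lemma Mr_pos (m : ℕ) : 0 < Mr m := by
  unfold Mr; positivity

lemma Mr_zero : Mr 0 = 1 := by simp [Mr]

lemma central_le (k : ℕ) : (2*k).choose k ≤ 4^k := by
  calc (2*k).choose k ≤ ∑ i ∈ Finset.range (2*k+1), (2*k).choose i :=
        Finset.single_le_sum (f := fun i => (2*k).choose i) (fun i _ => Nat.zero_le _)
          (by simp [Finset.mem_range]; omega)
    _ = 2^(2*k) := Nat.sum_range_choose (2*k)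
    _ = 4^k := by rw [pow_mul]; norm_num

lemma Mr_le_factorial (k : ℕ) : Mr k ≤ (k.factorial : ℝ) := by
  rw [Mr, div_le_iff₀ (by positivity)]
  have h : ((2*k).factorial : ℝ) = ((2*k).choose k : ℝ) * k.factorial * k.factorial := by
    have := Nat.choose_mul_factorial_mul_factorial (Nat.le_mul_of_pos_left k (by norm_num) : k ≤ 2*k)
    rw [(by omega : 2*k - k = k)] at this
    exact_mod_cast this.symm
  rw [h]
  have h4 : ((2*k).choose k : ℝ) ≤ 4^k := by exact_mod_cast central_le k
  calc ((2*k).choose k : ℝ) * k.factorial * k.factorial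
      ≤ 4^k * k.factorial * k.factorial := by gcongr
    _ = k.factorial * (4^k * k.factorial) := by ring

lemma half_le_Mr {j : ℕ} (hj : 1 ≤ j) : (1:ℝ)/2 ≤ Mr j := by
  have key : ∀ j, 1 ≤ j → 4^j * j.factorial ≤ 2 * (2*j).factorial := by
    intro j hj
    induction j with
    | zero => omega
    | succ n ih =>
      rcases Nat.eq_or_lt_of_le hj with h1 | h1
      · have hn0 : n = 0 := by omega
        subst hn0; decide
      · have hn : 1 ≤ n := by omega
        have := ih hn
        have h2 : (2*(n+1)) = (2*n+1)+1 := by ring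
        rw [h2, Nat.factorial_succ, (by ring : 2*n+1 = (2*n)+1), Nat.factorial_succ]
        calc 4^(n+1) * (n+1).factorial = (4*(n+1)) * (4^n * n.factorial) := by
              rw [Nat.factorial_succ]; ring
          _ ≤ (4*(n+1)) * (2 * (2*n).factorial) := Nat.mul_le_mul_left _ this
          _ ≤ ((2*n+1+1) * ((2*n+1) * (2*n).factorial)) * 2 := by
              have : 4*(n+1) ≤ (2*n+1+1)*(2*n+1) := by nlinarith
              calc (4*(n+1)) * (2 * (2*n).factorial) = (4*(n+1)) * (2*n).factorial * 2 := by ring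
                _ ≤ ((2*n+1+1)*(2*n+1)) * (2*n).factorial * 2 := by
                    exact Nat.mul_le_mul_right _ (Nat.mul_le_mul_right _ this)
                _ = ((2*n+1+1) * ((2*n+1) * (2*n).factorial)) * 2 := by ring
          _ = 2 * ((2*n+1+1) * ((2*n+1) * (2*n).factorial)) := by ring
  have h := key j hj
  rw [Mr, le_div_iff₀ (by positivity)]
  have : (4^j * j.factorial : ℝ) ≤ 2 * (2*j).factorial := by exact_mod_cast h
  linarith

lemma Mr_identity {k j : ℕ} (hj : j ≤ k) :
    ((2*k).choose (2*j) : ℝ) * Mr j * Mr (k-j) = Mr k * (k.choose j : ℝ) := by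
  have h1 : 2*j ≤ 2*k := by omega
  rw [Nat.cast_choose ℝ h1, Nat.cast_choose ℝ hj]
  unfold Mr
  rw [(by omega : 2*k - 2*j = 2*(k-j))]
  have f1 : ((2*j).factorial : ℝ) ≠ 0 := by exact_mod_cast (Nat.factorial_pos _).ne'
  have f2 : ((2*(k-j)).factorial : ℝ) ≠ 0 := by exact_mod_cast (Nat.factorial_pos _).ne'
  have f3 : (j.factorial : ℝ) ≠ 0 := by exact_mod_cast (Nat.factorial_pos _).ne'
  have f4 : ((k-j).factorial : ℝ) ≠ 0 := by exact_mod_cast (Nat.factorial_pos _).ne'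
  have f5 : (k.factorial : ℝ) ≠ 0 := by exact_mod_cast (Nat.factorial_pos _).ne'
  have f6 : (4:ℝ)^j ≠ 0 := by positivity
  have f7 : (4:ℝ)^(k-j) ≠ 0 := by positivity
  have f8 : (4:ℝ)^k ≠ 0 := by positivity
  have hpow : (4:ℝ)^j * 4^(k-j) = 4^k := by
    rw [← pow_add, (by omega : j + (k-j) = k)]
  field_simp
  ring_nf
  rw [← hpow]

lemma cosInt_odd (m : ℕ) (hm : Odd m) : ∫ x in (0:ℝ)..1, Real.cos (2*π*x) ^ m = 0 := by
  have h2 : (2*π : ℝ) ≠ 0 := by positivity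
  have h := intervalIntegral.integral_comp_mul_left (fun u => Real.cos u ^ m) h2 (a := 0) (b := 1)
  simp only [mul_zero, mul_one] at h
  rw [h]
  have hsplit : ∫ u in (0:ℝ)..(2*π), Real.cos u ^ m
      = (∫ u in (0:ℝ)..π, Real.cos u ^ m) + ∫ u in π..(2*π), Real.cos u ^ m := by
    rw [intervalIntegral.integral_add_adjacent_intervals] <;>
      exact (Real.continuous_cos.pow m).intervalIntegrable _ _
  have hshift : ∫ u in π..(2*π), Real.cos u ^ m = - ∫ u in (0:ℝ)..π, Real.cos u ^ m := by
    have := intervalIntegral.integral_comp_add_right (a := (0:ℝ)) (b := π)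
      (fun u => Real.cos u ^ m) π
    rw [zero_add, (by ring : π + π = 2*π)] at this
    rw [← this]
    simp only [Real.cos_add_pi]
    rw [← intervalIntegral.integral_neg]
    congr 1; ext u; rw [hm.neg_pow]
  rw [hsplit, hshift]
  simp

lemma cosInt_sq : ∫ x in (0:ℝ)..1, Real.cos (2*π*x) ^ 2 = 1/2 := by
  have h2 : (2*π : ℝ) ≠ 0 := by positivity
  have h := intervalIntegral.integral_comp_mul_left (fun u => Real.cos u ^ 2) h2 (a := 0) (b := 1)
  simp only [mul_zero, mul_one] at h
  rw [h, integral_cos_sq]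
  rw [Real.sin_two_pi, Real.cos_two_pi]
  field_simp
  simp [Real.pi_ne_zero]
  field_simp

/-- Moment bound for random cosine series: if `Z = Σ_n c_n cos(2π X_n)` (as an `L²` limit)
with `Σ c_n² < ∞` and the `X_n` independent uniform on `[0,1]`, then
`E[|Z|^{2k}] ≤ k! (Σ c_n²)^k`. -/
theorem stmt7 {Ω : Type*} [MeasureSpace Ω] (μ : Measure Ω) [IsProbabilityMeasure μ]
    (X : ℕ → Ω → ℝ)
    (hmeas : ∀ n, Measurable (X n))
    (hindep : iIndepFun X μ)
    (hunif : ∀ n, Measure.map (X n) μ = volume.restrict (Set.Icc (0 : ℝ) 1))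
    (c : ℕ → ℝ) (hc : Summable (fun n => c n ^ 2))
    (Z : Ω → ℝ) (hZmeas : Measurable Z)
    (hZ : Tendsto (fun N => eLpNorm
        (fun ω => (∑ n ∈ Finset.range N, c n * Real.cos (2 * Real.pi * X n ω)) - Z ω) 2 μ)
      atTop (nhds 0))
    (k : ℕ) (hk : 0 < k) :
    (∫ ω, |Z ω| ^ (2 * k) ∂μ) ≤ (k.factorial : ℝ) * (∑' n, c n ^ 2) ^ k := by
  classical
  set Y : ℕ → Ω → ℝ := fun n ω => Real.cos (2 * Real.pi * X n ω) with hYdef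
  set W : ℕ → Ω → ℝ := fun n ω => c n * Y n ω with hWdef
  set S : ℕ → Ω → ℝ := fun N => ∑ n ∈ Finset.range N, W n with hSdef
  have hYm : ∀ n, Measurable (Y n) := fun n =>
    Real.measurable_cos.comp ((hmeas n).const_mul _)
  have hWm : ∀ n, Measurable (W n) := fun n => (hYm n).const_mul _
  have hSapp : ∀ N ω, S N ω = ∑ n ∈ Finset.range N, W n ω := by
    intro N ω; simp [hSdef]
  have hSm : ∀ N, Measurable (S N) := by
    intro N
    have : Measurable fun ω => ∑ n ∈ Finset.range N, W n ω :=
      Finset.measurable_sum _ (fun n _ => hWm n)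
    simpa [← hSapp] using this
  -- bounds
  have hYb : ∀ n ω, |Y n ω| ≤ 1 := fun n ω => Real.abs_cos_le_one _
  have hWb : ∀ n ω, |W n ω| ≤ |c n| := by
    intro n ω
    rw [hWdef]
    calc |c n * Y n ω| = |c n| * |Y n ω| := abs_mul _ _
      _ ≤ |c n| * 1 := by gcongr; exact hYb n ω
      _ = |c n| := mul_one _
  have hSb : ∀ N ω, |S N ω| ≤ ∑ n ∈ Finset.range N, |c n| := by
    intro N ω
    rw [hSapp]
    calc |∑ n ∈ Finset.range N, W n ω| ≤ ∑ n ∈ Finset.range N, |W n ω| :=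
          Finset.abs_sum_le_sum_abs _ _
      _ ≤ ∑ n ∈ Finset.range N, |c n| := Finset.sum_le_sum fun n _ => hWb n ω
  -- integrability of bounded measurable functions
  have hInt : ∀ (f : Ω → ℝ) (C : ℝ), Measurable f → (∀ ω, |f ω| ≤ C) → Integrable f μ := by
    intro f C hm hb
    exact (integrable_const C).mono' hm.aestronglyMeasurable
      (ae_of_all _ (by simpa [Real.norm_eq_abs] using hb))
  -- moments of Y
  have hmap : ∀ n (m : ℕ),
      ∫ ω, Y n ω ^ m ∂μ = ∫ x in (0:ℝ)..1, Real.cos (2*π*x) ^ m := by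
    intro n m
    have hg : Measurable fun x : ℝ => Real.cos (2*π*x) ^ m :=
      (Real.measurable_cos.comp (measurable_const_mul _)).pow_const m
    have h1 : ∫ ω, Y n ω ^ m ∂μ
        = ∫ x, Real.cos (2*π*x) ^ m ∂(Measure.map (X n) μ) :=
      (integral_map (hmeas n).aemeasurable hg.aestronglyMeasurable).symm
    rw [h1, hunif n, MeasureTheory.integral_Icc_eq_integral_Ioc,
      ← intervalIntegral.integral_of_le zero_le_one]
  have hYodd : ∀ n (m : ℕ), Odd m → ∫ ω, Y n ω ^ m ∂μ = 0 := by
    intro n m hm; rw [hmap n m]; exact cosInt_odd m hm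
  have hYsq : ∀ n, ∫ ω, Y n ω ^ 2 ∂μ = 1/2 := by
    intro n; rw [hmap n 2]; exact cosInt_sq
  have hYM : ∀ n (j : ℕ), ∫ ω, Y n ω ^ (2*j) ∂μ ≤ Mr j := by
    intro n j
    rcases Nat.eq_zero_or_pos j with hj | hj
    · subst hj; simp [Mr_zero]
    · have hmono : ∫ ω, Y n ω ^ (2*j) ∂μ ≤ ∫ ω, Y n ω ^ 2 ∂μ := by
        apply integral_mono
        · exact hInt _ 1 ((hYm n).pow_const _) (fun ω => by
            rw [abs_pow]; exact pow_le_one₀ (abs_nonneg _) (hYb n ω))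
        · exact hInt _ 1 ((hYm n).pow_const _) (fun ω => by
            rw [abs_pow]; exact pow_le_one₀ (abs_nonneg _) (hYb n ω))
        · intro ω
          show Y n ω ^ (2*j) ≤ Y n ω ^ 2
          have h1 : Y n ω ^ 2 ≤ 1 := (sq_le_one_iff_abs_le_one _).mpr (hYb n ω)
          calc Y n ω ^ (2*j) = (Y n ω ^ 2) ^ j := by rw [pow_mul]
            _ ≤ (Y n ω ^ 2) ^ 1 := pow_le_pow_of_le_one (sq_nonneg _) h1 hj
            _ = Y n ω ^ 2 := pow_one _
      calc ∫ ω, Y n ω ^ (2*j) ∂μ ≤ ∫ ω, Y n ω ^ 2 ∂μ := hmono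
        _ = 1/2 := hYsq n
        _ ≤ Mr j := half_le_Mr hj
  have hYnn : ∀ n (j : ℕ), 0 ≤ ∫ ω, Y n ω ^ (2*j) ∂μ := by
    intro n j
    apply integral_nonneg
    intro ω
    show 0 ≤ Y n ω ^ (2*j)
    rw [pow_mul]
    positivity
  -- independence
  have hWindep : iIndepFun W μ := by
    have := hindep.comp (fun n (x : ℝ) => c n * Real.cos (2*Real.pi*x))
      (fun n => (Real.measurable_cos.comp (measurable_const_mul _)).const_mul _)
    exact this
  have hSW : ∀ N, IndepFun (S N) (W N) μ := fun N =>
    hWindep.indepFun_sum_range_succ hWm N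
  have hfact : ∀ N (a b : ℕ),
      ∫ ω, S N ω ^ a * W N ω ^ b ∂μ = (∫ ω, S N ω ^ a ∂μ) * ∫ ω, W N ω ^ b ∂μ := by
    intro N a b
    have h := ((hSW N).comp (measurable_id.pow_const a) (measurable_id.pow_const b)).integral_mul_eq_mul_integral
      ((hSm N).pow_const a).aestronglyMeasurable ((hWm N).pow_const b).aestronglyMeasurable
    simpa [Function.comp] using h
  have hW_odd : ∀ N (b : ℕ), Odd b → ∫ ω, W N ω ^ b ∂μ = 0 := by
    intro N b hb
    have : (fun ω => W N ω ^ b) = fun ω => c N ^ b * Y N ω ^ b := by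
      funext ω; rw [hWdef]; ring
    rw [this, integral_const_mul, hYodd N b hb, mul_zero]
  have hW_even : ∀ N (j : ℕ), ∫ ω, W N ω ^ (2*j) ∂μ = (c N ^ 2) ^ j * ∫ ω, Y N ω ^ (2*j) ∂μ := by
    intro N j
    have : (fun ω => W N ω ^ (2*j)) = fun ω => (c N ^ 2) ^ j * Y N ω ^ (2*j) := by
      funext ω; rw [hWdef]; rw [mul_pow, ← pow_mul]
    rw [this, integral_const_mul]
  -- main induction
  have key : ∀ N (m : ℕ), ∫ ω, S N ω ^ (2*m) ∂μ ≤ Mr m * (∑ n ∈ Finset.range N, c n ^ 2) ^ m := by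
    intro N
    induction N with
    | zero =>
      intro m
      have hS0 : ∀ ω, S 0 ω = 0 := by intro ω; simp [hSapp]
      rcases Nat.eq_zero_or_pos m with hm | hm
      · subst hm; simp [hS0, Mr_zero]
      · have h0 : (fun ω => S 0 ω ^ (2*m)) = fun _ => (0:ℝ) := by
          funext ω; rw [hS0, zero_pow (by omega)]
        rw [h0, integral_zero]
        have : (∑ n ∈ Finset.range 0, c n ^ 2) ^ m = 0 := by
          simp [zero_pow hm.ne']
        rw [this, mul_zero]
    | succ N ih =>
      intro m
      set σ := ∑ n ∈ Finset.range N, c n ^ 2 with hσ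
      have hσnn : 0 ≤ σ := Finset.sum_nonneg fun n _ => sq_nonneg _
      have hIntSW : ∀ a b : ℕ, Integrable (fun ω => S N ω ^ a * W N ω ^ b) μ := by
        intro a b
        apply hInt _ ((∑ n ∈ Finset.range N, |c n|) ^ a * |c N| ^ b)
          (((hSm N).pow_const a).mul ((hWm N).pow_const b))
        intro ω
        simp only [Pi.mul_apply]
        rw [abs_mul, abs_pow, abs_pow]
        exact mul_le_mul (pow_le_pow_left₀ (abs_nonneg _) (hSb N ω) a)
          (pow_le_pow_left₀ (abs_nonneg _) (hWb N ω) b) (by positivity) (by positivity)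
      have hexp : ∀ ω, S (N+1) ω ^ (2*m)
          = ∑ i ∈ Finset.range (2*m+1), S N ω ^ i * W N ω ^ (2*m-i) * ((2*m).choose i : ℝ) := by
        intro ω
        have : S (N+1) ω = S N ω + W N ω := by
          rw [hSapp, hSapp, Finset.sum_range_succ]
        rw [this, add_pow]
      have step1 : ∫ ω, S (N+1) ω ^ (2*m) ∂μ
          = ∑ i ∈ Finset.range (2*m+1),
              (∫ ω, S N ω ^ i ∂μ) * (∫ ω, W N ω ^ (2*m-i) ∂μ) * ((2*m).choose i : ℝ) := by
        rw [show (fun ω => S (N+1) ω ^ (2*m)) = fun ω => ∑ i ∈ Finset.range (2*m+1),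
            S N ω ^ i * W N ω ^ (2*m-i) * ((2*m).choose i : ℝ) from funext hexp]
        rw [integral_finset_sum _ (fun i _ => (hIntSW i (2*m-i)).mul_const _)]
        refine Finset.sum_congr rfl fun i _ => ?_
        rw [integral_mul_const, hfact N i (2*m-i)]
      -- odd terms vanish; reindex even terms
      have himg : (Finset.range (2*m+1)).filter (fun i => Even i)
          = (Finset.range (m+1)).image (fun j => 2*j) := by
        ext i
        simp only [Finset.mem_filter, Finset.mem_range, Finset.mem_image]
        constructor
        · rintro ⟨h1, r, rfl⟩
          exact ⟨r, by omega, by omega⟩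
        · rintro ⟨j, hj, rfl⟩
          exact ⟨by omega, j, by omega⟩
      have step2 : ∑ i ∈ Finset.range (2*m+1),
            (∫ ω, S N ω ^ i ∂μ) * (∫ ω, W N ω ^ (2*m-i) ∂μ) * ((2*m).choose i : ℝ)
          = ∑ j ∈ Finset.range (m+1),
            (∫ ω, S N ω ^ (2*j) ∂μ) * (∫ ω, W N ω ^ (2*(m-j)) ∂μ) * ((2*m).choose (2*j) : ℝ) := by
        rw [← Finset.sum_filter_add_sum_filter_not (Finset.range (2*m+1)) (fun i => Even i)]
        have hodd : ∑ i ∈ (Finset.range (2*m+1)).filter (fun i => ¬ Even i),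
            (∫ ω, S N ω ^ i ∂μ) * (∫ ω, W N ω ^ (2*m-i) ∂μ) * ((2*m).choose i : ℝ) = 0 := by
          apply Finset.sum_eq_zero
          intro i hi
          simp only [Finset.mem_filter, Finset.mem_range] at hi
          have : Odd (2*m - i) := by
            rcases hi with ⟨hi1, hi2⟩
            rw [Nat.not_even_iff_odd] at hi2
            rcases hi2 with ⟨r, hr⟩
            exact ⟨m - r - 1, by omega⟩
          rw [hW_odd N _ this, mul_zero, zero_mul]
        rw [hodd, add_zero, himg, Finset.sum_image (fun a _ b _ h => by omega)]
        refine Finset.sum_congr rfl fun j hj => ?_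
        simp only [Finset.mem_range] at hj
        rw [(by omega : 2*m - 2*j = 2*(m-j))]
      have step3 : ∑ j ∈ Finset.range (m+1),
            (∫ ω, S N ω ^ (2*j) ∂μ) * (∫ ω, W N ω ^ (2*(m-j)) ∂μ) * ((2*m).choose (2*j) : ℝ)
          ≤ ∑ j ∈ Finset.range (m+1),
            (Mr j * σ ^ j) * ((c N ^ 2) ^ (m-j) * Mr (m-j)) * ((2*m).choose (2*j) : ℝ) := by
        apply Finset.sum_le_sum
        intro j hj
        have hS_nn : 0 ≤ ∫ ω, S N ω ^ (2*j) ∂μ :=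
          integral_nonneg fun ω => Even.pow_nonneg ⟨j, two_mul j⟩ _
        have hW_nn : 0 ≤ ∫ ω, W N ω ^ (2*(m-j)) ∂μ := by
          rw [hW_even N (m-j)]
          exact mul_nonneg (by positivity) (hYnn N (m-j))
        have hSle : ∫ ω, S N ω ^ (2*j) ∂μ ≤ Mr j * σ ^ j := ih j
        have hWle : ∫ ω, W N ω ^ (2*(m-j)) ∂μ ≤ (c N ^ 2) ^ (m-j) * Mr (m-j) := by
          rw [hW_even N (m-j)]
          exact mul_le_mul_of_nonneg_left (hYM N (m-j)) (by positivity)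
        have h1 := mul_le_mul hSle hWle hW_nn
          (mul_nonneg (Mr_pos j).le (pow_nonneg hσnn j))
        exact mul_le_mul_of_nonneg_right h1 (Nat.cast_nonneg _)
      have step4 : ∑ j ∈ Finset.range (m+1),
            (Mr j * σ ^ j) * ((c N ^ 2) ^ (m-j) * Mr (m-j)) * ((2*m).choose (2*j) : ℝ)
          = Mr m * (σ + c N ^ 2) ^ m := by
        rw [add_pow, Finset.mul_sum]
        refine Finset.sum_congr rfl fun j hj => ?_
        simp only [Finset.mem_range] at hj
        have hid := Mr_identity (k := m) (j := j) (by omega)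
        calc (Mr j * σ ^ j) * ((c N ^ 2) ^ (m-j) * Mr (m-j)) * ((2*m).choose (2*j) : ℝ)
            = (((2*m).choose (2*j) : ℝ) * Mr j * Mr (m-j)) * (σ ^ j * (c N ^ 2) ^ (m-j)) := by ring
          _ = (Mr m * (m.choose j : ℝ)) * (σ ^ j * (c N ^ 2) ^ (m-j)) := by rw [hid]
          _ = Mr m * (σ ^ j * (c N ^ 2) ^ (m - j) * (m.choose j : ℝ)) := by ring
      have hsum : σ + c N ^ 2 = ∑ n ∈ Finset.range (N+1), c n ^ 2 := by
        rw [Finset.sum_range_succ]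
      calc ∫ ω, S (N+1) ω ^ (2*m) ∂μ
          = _ := step1
        _ = _ := step2
        _ ≤ _ := step3
        _ = Mr m * (σ + c N ^ 2) ^ m := step4
        _ = Mr m * (∑ n ∈ Finset.range (N+1), c n ^ 2) ^ m := by rw [hsum]
  -- pass to the limit
  set τ := ∑' n, c n ^ 2 with hτ
  have hτnn : 0 ≤ τ := tsum_nonneg fun n => sq_nonneg _
  have hbound : ∀ N, ∫ ω, S N ω ^ (2*k) ∂μ ≤ (k.factorial : ℝ) * τ ^ k := by
    intro N
    calc ∫ ω, S N ω ^ (2*k) ∂μ ≤ Mr k * (∑ n ∈ Finset.range N, c n ^ 2) ^ k := key N k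
      _ ≤ (k.factorial : ℝ) * τ ^ k := by
          have hσN : (∑ n ∈ Finset.range N, c n ^ 2) ≤ τ :=
            hc.sum_le_tsum _ (fun n _ => sq_nonneg _)
          have hσNnn : 0 ≤ ∑ n ∈ Finset.range N, c n ^ 2 :=
            Finset.sum_nonneg fun n _ => sq_nonneg _
          exact mul_le_mul (Mr_le_factorial k) (pow_le_pow_left₀ hσNnn hσN k)
            (pow_nonneg hσNnn k) (Nat.cast_nonneg _)
  have hZ' : Tendsto (fun N => eLpNorm (S N - Z) 2 μ) atTop (nhds 0) := by
    have hfun : ∀ N, (S N - Z)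
        = fun ω => (∑ n ∈ Finset.range N, c n * Real.cos (2 * Real.pi * X n ω)) - Z ω := by
      intro N; funext ω
      simp [hSapp, hWdef, hYdef]
    simpa only [hfun] using hZ
  obtain ⟨ns, hns_mono, hae⟩ :=
    (tendstoInMeasure_of_tendsto_eLpNorm (two_ne_zero)
      (fun N => (hSm N).aestronglyMeasurable) hZmeas.aestronglyMeasurable hZ').exists_seq_tendsto_ae
  -- Fatou
  have hae2 : ∀ᵐ ω ∂μ, ENNReal.ofReal (|Z ω| ^ (2*k))
      = liminf (fun i => ENNReal.ofReal (|S (ns i) ω| ^ (2*k))) atTop := by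
    filter_upwards [hae] with ω hω
    have h1 : Tendsto (fun i => ENNReal.ofReal (|S (ns i) ω| ^ (2*k))) atTop
        (nhds (ENNReal.ofReal (|Z ω| ^ (2*k)))) :=
      (ENNReal.continuous_ofReal.tendsto _).comp ((hω.abs).pow (2*k))
    exact h1.liminf_eq.symm
  have hlin : ∫⁻ ω, ENNReal.ofReal (|Z ω| ^ (2*k)) ∂μ
      ≤ ENNReal.ofReal ((k.factorial : ℝ) * τ ^ k) := by
    calc ∫⁻ ω, ENNReal.ofReal (|Z ω| ^ (2*k)) ∂μ
        = ∫⁻ ω, liminf (fun i => ENNReal.ofReal (|S (ns i) ω| ^ (2*k))) atTop ∂μ :=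
          lintegral_congr_ae hae2
      _ ≤ liminf (fun i => ∫⁻ ω, ENNReal.ofReal (|S (ns i) ω| ^ (2*k)) ∂μ) atTop :=
          lintegral_liminf_le fun i =>
            (ENNReal.measurable_ofReal.comp (((hSm (ns i)).abs).pow_const _))
      _ ≤ ENNReal.ofReal ((k.factorial : ℝ) * τ ^ k) := by
          have hle : ∀ i, ∫⁻ ω, ENNReal.ofReal (|S (ns i) ω| ^ (2*k)) ∂μ
              ≤ ENNReal.ofReal ((k.factorial : ℝ) * τ ^ k) := by
            intro i
            have habs : ∀ ω, |S (ns i) ω| ^ (2*k) = S (ns i) ω ^ (2*k) := by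
              intro ω
              rw [← abs_pow, abs_of_nonneg (Even.pow_nonneg ⟨k, two_mul k⟩ _)]
            have hint : Integrable (fun ω => S (ns i) ω ^ (2*k)) μ :=
              hInt _ ((∑ n ∈ Finset.range (ns i), |c n|) ^ (2*k))
                ((hSm (ns i)).pow_const _)
                (fun ω => by
                  rw [abs_pow]
                  exact pow_le_pow_left₀ (abs_nonneg _) (hSb (ns i) ω) _)
            calc ∫⁻ ω, ENNReal.ofReal (|S (ns i) ω| ^ (2*k)) ∂μ
                = ∫⁻ ω, ENNReal.ofReal (S (ns i) ω ^ (2*k)) ∂μ := by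
                  apply lintegral_congr; intro ω; rw [habs]
              _ = ENNReal.ofReal (∫ ω, S (ns i) ω ^ (2*k) ∂μ) :=
                  (ofReal_integral_eq_lintegral_ofReal hint
                    (ae_of_all _ fun ω => Even.pow_nonneg ⟨k, two_mul k⟩ _)).symm
              _ ≤ ENNReal.ofReal ((k.factorial : ℝ) * τ ^ k) :=
                  ENNReal.ofReal_le_ofReal (hbound (ns i))
          calc liminf (fun i => ∫⁻ ω, ENNReal.ofReal (|S (ns i) ω| ^ (2*k)) ∂μ) atTop
              ≤ liminf (fun _ => ENNReal.ofReal ((k.factorial : ℝ) * τ ^ k)) atTop :=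
                Filter.liminf_le_liminf (Filter.Eventually.of_forall hle)
            _ = ENNReal.ofReal ((k.factorial : ℝ) * τ ^ k) := Filter.liminf_const _
  -- conclude
  have hnn : 0 ≤ᵐ[μ] fun ω => |Z ω| ^ (2*k) :=
    ae_of_all _ fun ω => by positivity
  rw [MeasureTheory.integral_eq_lintegral_of_nonneg_ae hnn
    ((hZmeas.abs.pow_const _).aestronglyMeasurable)]
  exact ENNReal.toReal_le_of_le_ofReal
    (mul_nonneg (Nat.cast_nonneg _) (pow_nonneg hτnn k)) hlin
end
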